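/- arXiv:1507.01238 — 2 statements merged into one kernel-verified Lean document; each statement's English description precedes it below -/
import Mathlib

section
/- Suppose the subspaces S_1, ..., S_n are independent, i.e., dim(S_1 + ... + S_n) = dim(S_1) + ... + dim(S_n). Then for every data point x_j ∈ S_i, the representation c* produced by OMP(X_{-j}, x_j) with termination parameters ε = 0 and k_max = N − 1 is subspace preserving: for every m, c*_m ≠ 0 implies x_m ∈ S_i. -/
open scoped RealInnerProductSpace Classical

noncomputable section

namespace SSCOMP

variable {D : ℕ}

noncomputable def ompSelect {ι : Type*} [Fintype ι] [LinearOrder ι] [Nonempty ι]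
    (a : ι → EuclideanSpace ℝ (Fin D)) (q : EuclideanSpace ℝ (Fin D)) : ι :=
  (Finset.univ.filter fun i => ∀ m, |⟪a m, q⟫| ≤ |⟪a i, q⟫|).min' (by
    obtain ⟨i, -, hi⟩ := Finset.exists_max_image (Finset.univ : Finset ι)
      (fun m => |⟪a m, q⟫|) Finset.univ_nonempty
    exact ⟨i, Finset.mem_filter.mpr ⟨Finset.mem_univ i, fun m => hi m (Finset.mem_univ m)⟩⟩)

noncomputable def ompState {ι : Type*} [Fintype ι] [LinearOrder ι]
    (a : ι → EuclideanSpace ℝ (Fin D)) (b : EuclideanSpace ℝ (Fin D)) :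
    ℕ → Finset ι × EuclideanSpace ℝ (Fin D)
  | 0 => (∅, b)
  | k + 1 =>
    let s := ompState a b k
    if s.2 = 0 then s
    else if h : Nonempty ι then
      haveI := h
      let T' : Finset ι := insert (ompSelect a s.2) s.1
      (T', b - (Submodule.orthogonalProjectionOnto (Submodule.span ℝ (a '' (T' : Set ι))) b :
        EuclideanSpace ℝ (Fin D)))
    else s

noncomputable def ompSupport {ι : Type*} [Fintype ι] [LinearOrder ι]
    (a : ι → EuclideanSpace ℝ (Fin D)) (b : EuclideanSpace ℝ (Fin D)) (k : ℕ) : Finset ι :=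
  (ompState a b k).1

noncomputable def ompResidual {ι : Type*} [Fintype ι] [LinearOrder ι]
    (a : ι → EuclideanSpace ℝ (Fin D)) (b : EuclideanSpace ℝ (Fin D)) (k : ℕ) :
    EuclideanSpace ℝ (Fin D) :=
  (ompState a b k).2

def IsOMPOutput {ι : Type*} [Fintype ι] [LinearOrder ι]
    (a : ι → EuclideanSpace ℝ (Fin D)) (b : EuclideanSpace ℝ (Fin D)) (kmax : ℕ)
    (c : ι → ℝ) : Prop :=
  (∀ m, c m ≠ 0 → m ∈ ompSupport a b kmax) ∧
  ∀ c' : ι → ℝ, (∀ m, c' m ≠ 0 → m ∈ ompSupport a b kmax) →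
    ‖b - ∑ m, c m • a m‖ ≤ ‖b - ∑ m, c' m • a m‖

/-- Set of normalized nonzero residual directions of OMP(a, b) run with `ε = 0`
and `k_max` large enough. -/
noncomputable def residualDirs {ι : Type*} [Fintype ι] [LinearOrder ι]
    (a : ι → EuclideanSpace ℝ (Fin D)) (b : EuclideanSpace ℝ (Fin D)) :
    Set (EuclideanSpace ℝ (Fin D)) :=
  {w | ∃ k, ompResidual a b k ≠ 0 ∧ w = ‖ompResidual a b k‖⁻¹ • ompResidual a b k}

/-- Coherence between two sets of unit-norm points. -/
noncomputable def coherence (A B : Set (EuclideanSpace ℝ (Fin D))) : ℝ :=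
  sSup {r : ℝ | ∃ u ∈ A, ∃ v ∈ B, r = |⟪u, v⟫|}

/-- Symmetrized convex hull `conv(±A)`. -/
noncomputable def symmHull (A : Set (EuclideanSpace ℝ (Fin D))) :
    Set (EuclideanSpace ℝ (Fin D)) :=
  convexHull ℝ (A ∪ (-A))

/-- Inradius of a convex body: the radius of the largest Euclidean ball
(within the linear span of the body) inscribed in it. -/
noncomputable def inradius (P : Set (EuclideanSpace ℝ (Fin D))) : ℝ :=
  sSup {r : ℝ | 0 ≤ r ∧ ∃ c ∈ Submodule.span ℝ P,
    ∀ y ∈ Submodule.span ℝ P, ‖y - c‖ ≤ r → y ∈ P}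

variable {n N : ℕ}

/-- `X^i`: the set of data points lying in the `i`-th subspace. -/
noncomputable def subX (S : Fin n → Submodule ℝ (EuclideanSpace ℝ (Fin D)))
    (x : Fin N → EuclideanSpace ℝ (Fin D)) (i : Fin n) : Set (EuclideanSpace ℝ (Fin D)) :=
  x '' {m | x m ∈ S i}

/-- `X^i_{-j}`: the set of data points lying in the `i`-th subspace, with `x j` removed. -/
noncomputable def subXmin (S : Fin n → Submodule ℝ (EuclideanSpace ℝ (Fin D)))
    (x : Fin N → EuclideanSpace ℝ (Fin D)) (i : Fin n) (j : Fin N) :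
    Set (EuclideanSpace ℝ (Fin D)) :=
  x '' {m | x m ∈ S i ∧ m ≠ j}

/-- `W_j^i`: the set of OMP residual directions associated with `X^i_{-j}` and `x j`. -/
noncomputable def Wji (S : Fin n → Submodule ℝ (EuclideanSpace ℝ (Fin D)))
    (x : Fin N → EuclideanSpace ℝ (Fin D)) (i : Fin n) (j : Fin N) :
    Set (EuclideanSpace ℝ (Fin D)) :=
  residualDirs (fun m : {m : Fin N // x m ∈ S i ∧ m ≠ j} => x m.1) (x j)

/-- `W^i`: the set of OMP residual directions associated with `X^i`. -/
noncomputable def Wfull (S : Fin n → Submodule ℝ (EuclideanSpace ℝ (Fin D)))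
    (x : Fin N → EuclideanSpace ℝ (Fin D)) (i : Fin n) : Set (EuclideanSpace ℝ (Fin D)) :=
  ⋃ j ∈ {j : Fin N | x j ∈ S i}, Wji S x i j

/-- `r_i := min_{j : x_j ∈ S_i} r(P^i_{-j})`. -/
noncomputable def rMin (S : Fin n → Submodule ℝ (EuclideanSpace ℝ (Fin D)))
    (x : Fin N → EuclideanSpace ℝ (Fin D)) (i : Fin n) : ℝ :=
  sInf {r : ℝ | ∃ j, x j ∈ S i ∧ r = inradius (symmHull (subXmin S x i j))}

/-- Cosine of the principal angle between two subspaces. -/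
noncomputable def cosAngle (Si Sk : Submodule ℝ (EuclideanSpace ℝ (Fin D))) : ℝ :=
  sSup {r : ℝ | ∃ u ∈ Si, ∃ v ∈ Sk, ‖u‖ = 1 ∧ ‖v‖ = 1 ∧ r = ⟪u, v⟫}


section Helpers

variable {ι : Type*} [Fintype ι] [LinearOrder ι]
  (a : ι → EuclideanSpace ℝ (Fin D)) (b : EuclideanSpace ℝ (Fin D))

lemma ompSelect_max [Nonempty ι] (q : EuclideanSpace ℝ (Fin D)) (m : ι) :
    |⟪a m, q⟫| ≤ |⟪a (ompSelect a q), q⟫| := by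
  unfold ompSelect
  have h := Finset.min'_mem
    (Finset.univ.filter fun i => ∀ m, |⟪a m, q⟫| ≤ |⟪a i, q⟫|) (by
      obtain ⟨i, -, hi⟩ := Finset.exists_max_image (Finset.univ : Finset ι)
        (fun m => |⟪a m, q⟫|) Finset.univ_nonempty
      exact ⟨i, Finset.mem_filter.mpr ⟨Finset.mem_univ i, fun m => hi m (Finset.mem_univ m)⟩⟩)
  exact (Finset.mem_filter.mp h).2 m

lemma ompState_succ (k : ℕ) : ompState a b (k+1) =
    if (ompState a b k).2 = 0 then ompState a b k
    else if h : Nonempty ι then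
      haveI := h
      (insert (ompSelect a (ompState a b k).2) (ompState a b k).1,
        b - (Submodule.orthogonalProjectionOnto (Submodule.span ℝ
          (a '' ((insert (ompSelect a (ompState a b k).2) (ompState a b k).1 : Finset ι) : Set ι))) b :
          EuclideanSpace ℝ (Fin D)))
    else ompState a b k := rfl

lemma ompState_succ_frozen (k : ℕ) (h1 : (ompState a b k).2 = 0) :
    ompState a b (k+1) = ompState a b k := by
  rw [ompState_succ, if_pos h1]

lemma ompState_succ_step [h2 : Nonempty ι] (k : ℕ) (h1 : (ompState a b k).2 ≠ 0) :
    ompState a b (k+1) =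
      (insert (ompSelect a (ompState a b k).2) (ompState a b k).1,
        b - (Submodule.orthogonalProjectionOnto (Submodule.span ℝ
          (a '' ((insert (ompSelect a (ompState a b k).2) (ompState a b k).1 : Finset ι) : Set ι))) b :
          EuclideanSpace ℝ (Fin D))) := by
  rw [ompState_succ, if_neg h1, dif_pos h2]

lemma ompResidual_eq (k : ℕ) :
    ompResidual a b k = b - (Submodule.orthogonalProjectionOnto
      (Submodule.span ℝ (a '' (ompSupport a b k : Set ι))) b : EuclideanSpace ℝ (Fin D)) := by
  induction k with
  | zero =>
    have h0 : ompSupport a b 0 = (∅ : Finset ι) := rfl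
    show b = b - _
    rw [h0]
    rw [show ((∅ : Finset ι) : Set ι) = (∅ : Set ι) from Finset.coe_empty,
      Set.image_empty, Submodule.span_empty, Submodule.orthogonalProjectionOnto_bot]
    simp
  | succ k ih =>
    by_cases h1 : (ompState a b k).2 = 0
    · rw [ompResidual, ompSupport, ompState_succ_frozen a b k h1]; exact ih
    · by_cases h2 : Nonempty ι
      · haveI := h2
        rw [ompResidual, ompSupport, ompState_succ_step a b k h1]
      · rw [ompResidual, ompSupport, ompState_succ, if_neg h1, dif_neg h2]; exact ih

lemma ompResidual_perp (k : ℕ) :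
    ompResidual a b k ∈ (Submodule.span ℝ (a '' (ompSupport a b k : Set ι)))ᗮ := by
  rw [ompResidual_eq a b k]
  exact Submodule.sub_starProjection_mem_orthogonal b

lemma ompResidual_succ_zero (k : ℕ) (h : ompResidual a b k = 0) :
    ompResidual a b (k+1) = 0 := by
  rw [ompResidual, ompState_succ_frozen a b k h]; exact h

end Helpers

section Helpers2

variable {ι : Type*} [Fintype ι] [LinearOrder ι]
  (a : ι → EuclideanSpace ℝ (Fin D)) (b : EuclideanSpace ℝ (Fin D))

lemma residual_inner_support (k : ℕ) {v : EuclideanSpace ℝ (Fin D)}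
    (hv : v ∈ Submodule.span ℝ (a '' (ompSupport a b k : Set ι))) :
    ⟪v, ompResidual a b k⟫ = 0 :=
  (Submodule.mem_orthogonal _ _).mp (ompResidual_perp a b k) v hv

lemma inner_residual_b (k : ℕ) :
    ⟪ompResidual a b k, b⟫ = ‖ompResidual a b k‖ ^ 2 := by
  have hq := ompResidual_eq a b k
  have hp : (Submodule.orthogonalProjectionOnto
      (Submodule.span ℝ (a '' (ompSupport a b k : Set ι))) b : EuclideanSpace ℝ (Fin D))
      ∈ Submodule.span ℝ (a '' (ompSupport a b k : Set ι)) := SetLike.coe_mem _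
  have h0 : ⟪(Submodule.orthogonalProjectionOnto
      (Submodule.span ℝ (a '' (ompSupport a b k : Set ι))) b : EuclideanSpace ℝ (Fin D)),
      ompResidual a b k⟫ = 0 := residual_inner_support a b k hp
  have hb' : b = ompResidual a b k + (Submodule.orthogonalProjectionOnto
      (Submodule.span ℝ (a '' (ompSupport a b k : Set ι))) b : EuclideanSpace ℝ (Fin D)) := by
    rw [hq]; abel
  calc ⟪ompResidual a b k, b⟫
      = ⟪ompResidual a b k, ompResidual a b k⟫
        + ⟪ompResidual a b k, (Submodule.orthogonalProjectionOnto
          (Submodule.span ℝ (a '' (ompSupport a b k : Set ι))) b : EuclideanSpace ℝ (Fin D))⟫ := by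
        rw [← inner_add_right]; rw [← hb']
    _ = ‖ompResidual a b k‖ ^ 2 := by
        rw [real_inner_comm] at h0
        rw [h0, real_inner_self_eq_norm_sq]; ring

variable (hb : b ∈ Submodule.span ℝ (Set.range a))

include hb

lemma ompSelect_inner_ne [Nonempty ι] (k : ℕ) (hk : ompResidual a b k ≠ 0) :
    ⟪a (ompSelect a (ompResidual a b k)), ompResidual a b k⟫ ≠ 0 := by
  intro h0
  have hall : ∀ m, ⟪a m, ompResidual a b k⟫ = 0 := by
    intro m
    have := ompSelect_max a (ompResidual a b k) m
    rw [h0] at this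
    simpa using abs_nonpos_iff.mp (by simpa using this)
  have horth : ompResidual a b k ∈ (Submodule.span ℝ (Set.range a))ᗮ := by
    rw [Submodule.mem_orthogonal]
    intro u hu
    induction hu using Submodule.span_induction with
    | mem v hv => obtain ⟨m, rfl⟩ := hv; exact hall m
    | zero => simp
    | add u v _ _ hu hv => rw [inner_add_left, hu, hv]; ring
    | smul r u _ hu => rw [real_inner_smul_left, hu]; ring
  have : ⟪ompResidual a b k, b⟫ = 0 := by
    have h := (Submodule.mem_orthogonal _ _).mp horth b hb
    rw [real_inner_comm] at h
    exact h
  rw [inner_residual_b] at this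
  exact hk (by
    have := sq_eq_zero_iff.mp this
    simpa using norm_eq_zero.mp this)

lemma ompSelect_not_mem [Nonempty ι] (k : ℕ) (hk : ompResidual a b k ≠ 0) :
    ompSelect a (ompResidual a b k) ∉ ompSupport a b k := by
  intro hmem
  apply ompSelect_inner_ne a b hb k hk
  exact residual_inner_support a b k
    (Submodule.subset_span (Set.mem_image_of_mem a hmem))

omit hb in
lemma ompSupport_succ_step [Nonempty ι] (k : ℕ) (hk : ompResidual a b k ≠ 0) :
    ompSupport a b (k+1) = insert (ompSelect a (ompResidual a b k)) (ompSupport a b k) := by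
  rw [ompSupport, ompState_succ_step a b k hk]; rfl

omit hb in
lemma ompSupport_succ_frozen (k : ℕ) (hk : ompResidual a b k = 0) :
    ompSupport a b (k+1) = ompSupport a b k := by
  rw [ompSupport, ompState_succ_frozen a b k hk]; rfl

lemma ompSupport_card [Nonempty ι] (k : ℕ) (hk : ompResidual a b k ≠ 0) :
    (ompSupport a b k).card = k := by
  induction k with
  | zero => rfl
  | succ k ih =>
    have hk' : ompResidual a b k ≠ 0 := fun h => hk (ompResidual_succ_zero a b k h)
    rw [ompSupport_succ_step a b k hk',
      Finset.card_insert_of_notMem (ompSelect_not_mem a b hb k hk'), ih hk']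

lemma support_sum_eq_zero [Nonempty ι] (k : ℕ) (g : ι → ℝ)
    (hg : ∀ m, g m ≠ 0 → m ∈ ompSupport a b k) (hsum : ∑ m, g m • a m = 0) :
    ∀ m, g m = 0 := by
  induction k with
  | zero =>
    intro m
    by_contra h
    exact absurd (hg m h) (Finset.notMem_empty m)
  | succ k ih =>
    by_cases hq : ompResidual a b k = 0
    · exact ih (fun m hm => (ompSupport_succ_frozen a b k hq) ▸ hg m hm)
    · have hstep := ompSupport_succ_step a b k hq
      have hgi : g (ompSelect a (ompResidual a b k)) = 0 := by
        have h1 : ⟪∑ m, g m • a m, ompResidual a b k⟫ = 0 := by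
          rw [hsum]; simp
        have h2 : ∑ m, g m * ⟪a m, ompResidual a b k⟫
            = g (ompSelect a (ompResidual a b k))
              * ⟪a (ompSelect a (ompResidual a b k)), ompResidual a b k⟫ := by
          apply Finset.sum_eq_single
          · intro m _ hne
            by_cases hgm : g m = 0
            · rw [hgm]; ring
            · have hm := hg m hgm
              rw [hstep, Finset.mem_insert] at hm
              rcases hm with hm | hm
              · exact absurd hm hne
              · rw [residual_inner_support a b k
                  (Submodule.subset_span (Set.mem_image_of_mem a hm))]; ring
          · intro h; exact absurd (Finset.mem_univ _) h
        rw [sum_inner] at h1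
        simp_rw [real_inner_smul_left] at h1
        rw [h2] at h1
        exact (mul_eq_zero.mp h1).resolve_right (ompSelect_inner_ne a b hb k hq)
      apply ih
      intro m hm
      have := hg m hm
      rw [hstep, Finset.mem_insert] at this
      rcases this with h | h
      · exact absurd (h ▸ hm) (by rw [hgi]; simp)
      · exact h

lemma b_mem_span_final [Nonempty ι] :
    b ∈ Submodule.span ℝ (a '' (ompSupport a b (Fintype.card ι) : Set ι)) := by
  have hz : ompResidual a b (Fintype.card ι) = 0 := by
    by_contra hz
    have hcard := ompSupport_card a b hb (Fintype.card ι) hz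
    have huniv : ompSupport a b (Fintype.card ι) = Finset.univ :=
      Finset.eq_univ_of_card _ hcard
    have : ompResidual a b (Fintype.card ι) = 0 := by
      rw [ompResidual_eq a b, huniv, Finset.coe_univ, Set.image_univ,
        sub_eq_zero]
      exact (Submodule.starProjection_eq_self_iff.mpr hb).symm
    exact hz this
  have := ompResidual_eq a b (Fintype.card ι)
  rw [hz] at this
  have hb2 : b = (Submodule.orthogonalProjectionOnto
      (Submodule.span ℝ (a '' (ompSupport a b (Fintype.card ι) : Set ι))) b :
      EuclideanSpace ℝ (Fin D)) := by
    have := this.symm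
    rwa [sub_eq_zero] at this
  have hmem := SetLike.coe_mem ((Submodule.orthogonalProjectionOnto
    (Submodule.span ℝ (a '' (ompSupport a b (Fintype.card ι) : Set ι)))) b)
  rw [← hb2] at hmem
  exact hmem

end Helpers2

section Indep

lemma finrank_finsetSup_le {n : ℕ} (S : Fin n → Submodule ℝ (EuclideanSpace ℝ (Fin D)))
    (t : Finset (Fin n)) :
    Module.finrank ℝ ↥(t.sup S) ≤ ∑ k ∈ t, Module.finrank ℝ (S k) := by
  induction t using Finset.induction with
  | empty => simp [Finset.sup_empty, finrank_bot]
  | @insert i t hi ih =>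
    rw [Finset.sup_insert, Finset.sum_insert hi]
    have h := Submodule.finrank_sup_add_finrank_inf_eq (S i) (t.sup S)
    omega

lemma indep_disjoint_erase {n : ℕ} (S : Fin n → Submodule ℝ (EuclideanSpace ℝ (Fin D)))
    (hindep : Module.finrank ℝ ↥(⨆ i, S i) = ∑ i, Module.finrank ℝ ↥(S i)) (i : Fin n) :
    Disjoint (S i) ((Finset.univ.erase i).sup S) := by
  have h1 : (⨆ k, S k) = Finset.univ.sup S := (Finset.sup_univ_eq_iSup S).symm
  have h2 : Finset.univ.sup S = S i ⊔ (Finset.univ.erase i).sup S := by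
    conv_lhs => rw [← Finset.insert_erase (Finset.mem_univ i)]
    rw [Finset.sup_insert]
  have h3 := Submodule.finrank_sup_add_finrank_inf_eq (S i) ((Finset.univ.erase i).sup S)
  have h4 := finrank_finsetSup_le S (Finset.univ.erase i)
  have h5 : ∑ k, Module.finrank ℝ ↥(S k)
      = Module.finrank ℝ ↥(S i) + ∑ k ∈ Finset.univ.erase i, Module.finrank ℝ ↥(S k) :=
    (Finset.add_sum_erase _ _ (Finset.mem_univ i)).symm
  rw [h1, h2] at hindep
  have h6 : Module.finrank ℝ ↥(S i ⊓ (Finset.univ.erase i).sup S) = 0 := by omega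
  rw [disjoint_iff]
  exact Submodule.finrank_eq_zero.mp h6

end Indep

/-- If the subspaces `S 1, ..., S n` are independent, then for every data
point `x j ∈ S i`, the representation `c` produced by `OMP(X₋ⱼ, x j)` with `ε = 0` and
`k_max = N - 1` is subspace preserving: `c m ≠ 0` implies `x m ∈ S i`. -/
theorem sscOmp_independent_subspacePreserving
    {D n N : ℕ} (S : Fin n → Submodule ℝ (EuclideanSpace ℝ (Fin D)))
    (x : Fin N → EuclideanSpace ℝ (Fin D))
    (hunit : ∀ j, ‖x j‖ = 1)
    (hmem : ∀ j, ∃ i, x j ∈ S i)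
    (hrank : ∀ i, ∀ j, x j ∈ S i → Submodule.span ℝ (subXmin S x i j) = S i)
    (hindep : Module.finrank ℝ ↥(⨆ i, S i) = ∑ i, Module.finrank ℝ ↥(S i))
    (i : Fin n) (j : Fin N) (hj : x j ∈ S i)
    (c : {m : Fin N // m ≠ j} → ℝ)
    (hc : IsOMPOutput (fun m => x m.1) (x j) (N - 1) c) :
    ∀ m : {m : Fin N // m ≠ j}, c m ≠ 0 → x m.1 ∈ S i := by
  intro m0 hm0
  haveI hne : Nonempty {m : Fin N // m ≠ j} := ⟨m0⟩
  by_contra hnotin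
  have hb : x j ∈ Submodule.span ℝ (Set.range (fun m : {m : Fin N // m ≠ j} => x m.1)) := by
    have h1 : x j ∈ Submodule.span ℝ (subXmin S x i j) := by
      rw [hrank i j hj]; exact hj
    refine Submodule.span_mono ?_ h1
    rintro _ ⟨m, ⟨hmS, hmj⟩, rfl⟩
    exact ⟨⟨m, hmj⟩, rfl⟩
  have hcard : Fintype.card {m : Fin N // m ≠ j} = N - 1 := by
    simp [Fintype.card_subtype_compl]
  have hbT : x j ∈ Submodule.span ℝ ((fun m : {m : Fin N // m ≠ j} => x m.1) ''
      ((ompSupport (fun m : {m : Fin N // m ≠ j} => x m.1) (x j) (N - 1) : Finset _) : Set _)) := by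
    have h := b_mem_span_final (fun m : {m : Fin N // m ≠ j} => x m.1) (x j) hb
    rwa [hcard] at h
  obtain ⟨l, hlsupp, hl⟩ := (Finsupp.mem_span_image_iff_linearCombination ℝ).mp hbT
  have hsum' : ∑ m, l m • x m.1 = x j := by
    rw [← hl, Finsupp.linearCombination_apply, Finsupp.sum_fintype]
    intro m; simp
  have hsupp' : ∀ m, l m ≠ 0 → m ∈ ompSupport (fun m : {m : Fin N // m ≠ j} => x m.1) (x j) (N - 1) :=
    fun m hm => (Finset.mem_coe).mp
      ((Finsupp.mem_supported ℝ l).mp hlsupp (Finsupp.mem_support_iff.mpr hm))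
  have hmin := hc.2 (fun m => l m) hsupp'
  have hrep : ∑ m, c m • x m.1 = x j := by
    have h0 : ‖x j - ∑ m, c m • x m.1‖ ≤ ‖x j - ∑ m, l m • x m.1‖ := hmin
    rw [hsum', sub_self, norm_zero] at h0
    have h1 := norm_le_zero_iff.mp h0
    rw [sub_eq_zero] at h1; exact h1.symm
  have hdisj := indep_disjoint_erase S hindep i
  have hy1 : (∑ m ∈ Finset.univ.filter (fun m : {m : Fin N // m ≠ j} => x m.1 ∈ S i),
      c m • x m.1) ∈ S i :=
    Submodule.sum_mem _ (fun m hm => Submodule.smul_mem _ _ ((Finset.mem_filter.mp hm).2))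
  have hy2 : (∑ m ∈ Finset.univ.filter (fun m : {m : Fin N // m ≠ j} => ¬ x m.1 ∈ S i),
      c m • x m.1) ∈ (Finset.univ.erase i).sup S :=
    Submodule.sum_mem _ (fun m hm => by
      obtain ⟨k, hk⟩ := hmem m.1
      have hki : k ≠ i := fun h => (Finset.mem_filter.mp hm).2 (h ▸ hk)
      have hle : S k ≤ (Finset.univ.erase i).sup S :=
        Finset.le_sup (Finset.mem_erase.mpr ⟨hki, Finset.mem_univ k⟩)
      exact Submodule.smul_mem _ _ (hle hk))
  have hsplit : (∑ m ∈ Finset.univ.filter (fun m : {m : Fin N // m ≠ j} => x m.1 ∈ S i),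
        c m • x m.1)
      + ∑ m ∈ Finset.univ.filter (fun m : {m : Fin N // m ≠ j} => ¬ x m.1 ∈ S i),
        c m • x m.1 = x j := by
    rw [Finset.sum_filter_add_sum_filter_not]; exact hrep
  have hySi : (∑ m ∈ Finset.univ.filter (fun m : {m : Fin N // m ≠ j} => ¬ x m.1 ∈ S i),
      c m • x m.1) ∈ S i := by
    have he : (∑ m ∈ Finset.univ.filter (fun m : {m : Fin N // m ≠ j} => ¬ x m.1 ∈ S i),
        c m • x m.1) = x j - ∑ m ∈ Finset.univ.filter
          (fun m : {m : Fin N // m ≠ j} => x m.1 ∈ S i), c m • x m.1 := by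
      rw [← hsplit]; abel
    rw [he]
    exact Submodule.sub_mem _ hj hy1
  have hyzero : ∑ m ∈ Finset.univ.filter (fun m : {m : Fin N // m ≠ j} => ¬ x m.1 ∈ S i),
      c m • x m.1 = 0 := Submodule.disjoint_def.mp hdisj _ hySi hy2
  have hgsum : ∑ m : {m : Fin N // m ≠ j},
      (if x m.1 ∈ S i then (0:ℝ) else c m) • x m.1 = 0 := by
    rw [← hyzero, Finset.sum_filter]
    apply Finset.sum_congr rfl
    intro m _
    by_cases h : x m.1 ∈ S i <;> simp [h]
  have hgsupp : ∀ m : {m : Fin N // m ≠ j}, (if x m.1 ∈ S i then (0:ℝ) else c m) ≠ 0 →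
      m ∈ ompSupport (fun m : {m : Fin N // m ≠ j} => x m.1) (x j) (N - 1) := by
    intro m hm
    apply hc.1
    intro hcm
    apply hm
    by_cases h : x m.1 ∈ S i <;> simp [h, hcm]
  have hgzero := support_sum_eq_zero (fun m : {m : Fin N // m ≠ j} => x m.1) (x j) hb (N - 1)
    (fun m => if x m.1 ∈ S i then (0:ℝ) else c m) hgsupp hgsum m0
  rw [if_neg hnotin] at hgzero
  exact hm0 hgzero


end SSCOMP
end
end

section
/- Run OMP(A, b) with termination parameters ε = 0 and k_max = M (the number of columns of A), where b lies in the column space of A. Then the algorithm terminates at some iteration k* ≤ M with residual q_{k*} = 0, and the output c* = argmin_{c : supp(c) ⊆ T_{k*}} ‖b − A c‖_2 satisfies b = A c*. -/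
open scoped RealInnerProductSpace Classical

noncomputable section

namespace SSCOMP

variable {D : ℕ}

variable {n N : ℕ}

section Aux
variable {D : ℕ} {ι : Type*} [Fintype ι] [LinearOrder ι]
  (a : ι → EuclideanSpace ℝ (Fin D)) (b : EuclideanSpace ℝ (Fin D))

lemma omp_step_eq {k : ℕ} (hq : (ompState a b k).2 ≠ 0) (hι : Nonempty ι) :
    ompState a b (k + 1) =
      (insert (ompSelect a (ompState a b k).2) (ompState a b k).1,
        b - (Submodule.orthogonalProjectionOnto (Submodule.span ℝ
          (a '' ((insert (ompSelect a (ompState a b k).2) (ompState a b k).1 : Finset ι) :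
            Set ι))) b : EuclideanSpace ℝ (Fin D))) := by
  rw [ompState]; simp [hq, hι]

lemma omp_residual_zero_succ {k : ℕ} (hq : (ompState a b k).2 = 0) :
    ompState a b (k + 1) = ompState a b k := by
  rw [ompState]; simp [hq]

lemma omp_residual_eq (k : ℕ) :
    (ompState a b k).2 =
      b - (Submodule.orthogonalProjectionOnto (Submodule.span ℝ (a '' ((ompState a b k).1 : Set ι))) b :
        EuclideanSpace ℝ (Fin D)) := by
  induction k with
  | zero =>
      have h0 : Submodule.span ℝ (a '' (((∅ : Finset ι) : Finset ι) : Set ι)) = ⊥ := by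
        simp
      show b = b - (Submodule.orthogonalProjectionOnto (Submodule.span ℝ
          (a '' (((∅ : Finset ι) : Finset ι) : Set ι))) b : EuclideanSpace ℝ (Fin D))
      rw [h0, Submodule.orthogonalProjectionOnto_bot]
      simp
  | succ k ih =>
      by_cases hq : (ompState a b k).2 = 0
      · rw [omp_residual_zero_succ a b hq]; exact ih
      · by_cases hι : Nonempty ι
        · rw [omp_step_eq a b hq hι]
        · have h1 : ompState a b (k + 1) = ompState a b k := by
            rw [ompState]; simp [hq, hι]
          rw [h1]; exact ih

lemma omp_residual_orth {k : ℕ} {m : ι} (hm : m ∈ (ompState a b k).1) :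
    ⟪a m, (ompState a b k).2⟫ = 0 := by
  rw [omp_residual_eq]
  have h := Submodule.sub_starProjection_mem_orthogonal
    (K := Submodule.span ℝ (a '' ((ompState a b k).1 : Set ι))) b
  exact (Submodule.mem_orthogonal _ _).1 h (a m)
    (Submodule.subset_span ⟨m, hm, rfl⟩)

lemma omp_residual_mem_span (hspan : b ∈ Submodule.span ℝ (Set.range a)) (k : ℕ) :
    (ompState a b k).2 ∈ Submodule.span ℝ (Set.range a) := by
  rw [omp_residual_eq]
  refine Submodule.sub_mem _ hspan ?_
  have h1 : Submodule.span ℝ (a '' ((ompState a b k).1 : Set ι)) ≤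
      Submodule.span ℝ (Set.range a) :=
    Submodule.span_mono (Set.image_subset_range _ _)
  exact h1 (Submodule.orthogonalProjectionOnto _ b).2

lemma exists_inner_ne_zero (hspan : b ∈ Submodule.span ℝ (Set.range a)) {k : ℕ}
    (hq : (ompState a b k).2 ≠ 0) : ∃ i, ⟪a i, (ompState a b k).2⟫ ≠ 0 := by
  by_contra h
  push_neg at h
  apply hq
  have hall : ∀ x ∈ Submodule.span ℝ (Set.range a), ⟪x, (ompState a b k).2⟫ = 0 := by
    intro x hx
    induction hx using Submodule.span_induction with
    | mem x hx => obtain ⟨i, rfl⟩ := hx; exact h i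
    | zero => simp
    | add x y _ _ hx hy => rw [inner_add_left, hx, hy, add_zero]
    | smul r x _ hx => rw [inner_smul_left, hx, mul_zero]
  have := hall _ (omp_residual_mem_span a b hspan k)
  exact inner_self_eq_zero.mp this

lemma ompSelect_not_mem_s10 (hspan : b ∈ Submodule.span ℝ (Set.range a)) {k : ℕ}
    (hq : (ompState a b k).2 ≠ 0) (hι : Nonempty ι) :
    ompSelect a (ompState a b k).2 ∉ (ompState a b k).1 := by
  obtain ⟨i, hi⟩ := exists_inner_ne_zero a b hspan hq
  intro hmem
  have hsel := Finset.min'_mem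
    (Finset.univ.filter fun j => ∀ m, |⟪a m, (ompState a b k).2⟫| ≤ |⟪a j, (ompState a b k).2⟫|)
    (by
      obtain ⟨j, -, hj⟩ := Finset.exists_max_image (Finset.univ : Finset ι)
        (fun m => |⟪a m, (ompState a b k).2⟫|) Finset.univ_nonempty
      exact ⟨j, Finset.mem_filter.mpr ⟨Finset.mem_univ j, fun m => hj m (Finset.mem_univ m)⟩⟩)
  rw [Finset.mem_filter] at hsel
  have hmax : |⟪a i, (ompState a b k).2⟫| ≤
      |⟪a (ompSelect a (ompState a b k).2), (ompState a b k).2⟫| := hsel.2 i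
  have hz : ⟪a (ompSelect a (ompState a b k).2), (ompState a b k).2⟫ = 0 :=
    omp_residual_orth a b hmem
  rw [hz, abs_zero] at hmax
  exact hi (abs_nonpos_iff.mp hmax)

lemma omp_card (hspan : b ∈ Submodule.span ℝ (Set.range a)) :
    ∀ k, (ompState a b k).2 ≠ 0 → (ompState a b k).1.card = k := by
  intro k
  induction k with
  | zero => intro _; simp [ompState]
  | succ k ih =>
      intro hq1
      have hq : (ompState a b k).2 ≠ 0 := by
        intro h0
        exact hq1 (by rw [omp_residual_zero_succ a b h0]; exact h0)
      have hι : Nonempty ι := ⟨(exists_inner_ne_zero a b hspan hq).choose⟩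
      rw [omp_step_eq a b hq hι]
      simp only
      rw [Finset.card_insert_of_notMem (ompSelect_not_mem_s10 a b hspan hq hι), ih hq]

end Aux

/-- Run OMP(A, b) with `ε = 0` and `k_max = M` (the number of columns of
`A`), where `b` lies in the column space of `A`. Then the algorithm terminates at some
iteration `k* ≤ M` with residual `q_{k*} = 0`, and the output
`c* = argmin_{supp(c) ⊆ T_{k*}} ‖b − A c‖₂` satisfies `b = A c*`. -/
theorem omp_terminates_and_exactRepresentation
    {D : ℕ} {ι : Type*} [Fintype ι] [LinearOrder ι]
    (a : ι → EuclideanSpace ℝ (Fin D)) (b : EuclideanSpace ℝ (Fin D))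
    (hspan : b ∈ Submodule.span ℝ (Set.range a)) :
    ∃ kstar ≤ Fintype.card ι, ompResidual a b kstar = 0 ∧
      ∀ c : ι → ℝ, IsOMPOutput a b kstar c → b = ∑ m, c m • a m := by
  set K := Fintype.card ι
  have hres : ompResidual a b K = 0 := by
    by_contra hq
    have hcard := omp_card a b hspan K hq
    have huniv : (ompState a b K).1 = Finset.univ :=
      Finset.eq_univ_of_card _ hcard
    apply hq
    show (ompState a b K).2 = 0
    rw [omp_residual_eq, huniv]
    have h2 : ((Finset.univ : Finset ι) : Set ι) = (Set.univ : Set ι) := by simp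
    rw [h2, Set.image_univ, Submodule.coe_orthogonalProjectionOnto_apply, Submodule.starProjection_eq_self_iff.mpr hspan, sub_self]
  refine ⟨K, le_refl _, hres, ?_⟩
  intro c ⟨hsupp, hmin⟩
  have hb : b ∈ Submodule.span ℝ (a '' ((ompState a b K).1 : Set ι)) := by
    have heq := omp_residual_eq a b K
    rw [ompResidual] at hres
    rw [hres] at heq
    have hb' : b = (Submodule.orthogonalProjectionOnto (Submodule.span ℝ
        (a '' ((ompState a b K).1 : Set ι))) b : EuclideanSpace ℝ (Fin D)) := by
      exact sub_eq_zero.mp heq.symm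
    have hmem := (Submodule.orthogonalProjectionOnto (Submodule.span ℝ
      (a '' ((ompState a b K).1 : Set ι))) b).2
    rw [← hb'] at hmem
    exact hmem
  obtain ⟨l, hl, hlb⟩ := (Finsupp.mem_span_image_iff_linearCombination ℝ).1 hb
  have hsum : ∑ m, l m • a m = b := by
    rw [← hlb, Finsupp.linearCombination_apply, Finsupp.sum_fintype]
    intro i; simp
  have hl' : ∀ m, (l : ι → ℝ) m ≠ 0 → m ∈ ompSupport a b K := by
    intro m hm
    exact hl (Finsupp.mem_support_iff.mpr hm)
  have hle := hmin (fun m => l m) hl'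
  rw [hsum, sub_self, norm_zero] at hle
  have hzero : ‖b - ∑ m, c m • a m‖ = 0 := le_antisymm hle (norm_nonneg _)
  exact (sub_eq_zero.mp (norm_eq_zero.mp hzero))

end SSCOMP
end
end
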